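/- arXiv:1606.03340 — 4 statements merged into one kernel-verified Lean document; each statement's English description precedes it below -/
import Mathlib

section
/- Let (X,d,μ) be upper doubling with dominating function λ and constant C_λ, let D be a David–Mattila lattice with parameters C_0, A_0, and let α ≥ 200. Let l₀ be the maximal integer with 100^{l₀} ≤ C_0/α and suppose C_0^{l₀/2} > C_λ^{⌈log₂ A_0⌉}. For a cell Q ∈ D set Θ(Q) := μ(αB(Q))/λ(z_Q, α·r(Q)). Let Q_0 ⊃ Q_1 ⊃ ⋯ ⊃ Q_m be a nested chain of cells with Q_j ∈ D_{k+j} for each j (consecutive generations) such that Q_1, …, Q_m are all non-doubling (i.e. μ(100B(Q_j)) > C_0·μ(B(Q_j))). Then Θ(Q_m) ≤ C·C_0^{−m·l₀/2}·Θ(Q_0), with C depending only on α, C_0, A_0, C_λ. -/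
open MeasureTheory Metric Set ENNReal

noncomputable section

variable {X : Type*} [MetricSpace X] [MeasurableSpace X] [BorelSpace X]

/-- The support of a measure on a metric space: points all of whose balls have
positive measure. -/
def msupport (μ : Measure X) : Set X := {x | ∀ r : ℝ, 0 < r → 0 < μ (ball x r)}

/-- `(X, d, μ)` is upper doubling with dominating function `lam` and constant `Cl`. -/
structure IsUpperDoubling (μ : Measure X) (lam : X → ℝ → ℝ) (Cl : ℝ) : Prop where
  one_lt : 1 < Cl
  lam_pos : ∀ x r, 0 < r → 0 < lam x r
  lam_mono : ∀ x r₁ r₂, 0 < r₁ → r₁ ≤ r₂ → lam x r₁ ≤ lam x r₂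
  measure_le : ∀ x r, 0 < r → μ (ball x r) ≤ ENNReal.ofReal (lam x r)
  halving : ∀ x r, 0 < r → lam x r ≤ Cl * lam x (r / 2)
  close : ∀ x y r, 0 < r → dist x y ≤ r → lam x r ≤ Cl * lam y r

/-- `(X, d)` is geometrically doubling with constant `C` and doubling dimension `n`:
every `r`-separated subset of a ball of radius `R ≥ r` has cardinality at most `C (R/r)^n`. -/
def GeometricallyDoubling (X : Type*) [MetricSpace X] (C : ℝ) (n : ℕ) : Prop :=
  ∀ (x : X) (R r : ℝ), 0 < r → r ≤ R →
    ∀ S : Finset X, (↑S : Set X) ⊆ ball x R →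
      (∀ a ∈ S, ∀ b ∈ S, a ≠ b → r ≤ dist a b) → (S.card : ℝ) ≤ C * (R / r) ^ n

/-- `ω` is a Dini modulus of continuity. -/
structure IsDiniModulus (ω : ℝ → ℝ) : Prop where
  nonneg : ∀ t, 0 ≤ t → 0 ≤ ω t
  mono : MonotoneOn ω (Set.Ici 0)
  subadd : ∀ s t, 0 ≤ s → 0 ≤ t → ω (s + t) ≤ ω s + ω t
  zero : ω 0 = 0
  pos : ∀ t, 0 < t → 0 < ω t
  summable : Summable (fun j : ℕ => ω ((2 : ℝ) ^ (-(j : ℤ))))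

/-- The Dini norm `∑_{j ≥ 0} ω(2^{-j})`. -/
def diniNorm (ω : ℝ → ℝ) : ℝ := ∑' j : ℕ, ω ((2 : ℝ) ^ (-(j : ℤ)))

/-- `K` is a Calderón–Zygmund kernel with size constant `CK` and modulus of continuity `ω`,
relative to the dominating function `lam`. -/
structure IsCZKernel (lam : X → ℝ → ℝ) (K : X → X → ℂ) (CK : ℝ) (ω : ℝ → ℝ) : Prop where
  size : ∀ x y, x ≠ y → ‖K x y‖ ≤ CK / lam x (dist x y)
  smooth : ∀ x x' y, x ≠ y → dist x x' < dist x y / 2 →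
    ‖K x y - K x' y‖ + ‖K y x - K y x'‖ ≤ ω (dist x x' / dist x y) / lam x (dist x y)

/-- The maximal truncation `T^♯ f(x) = sup_{ε > 0} |∫_{d(x,y) > ε} K(x,y) f(y) dμ(y)|`,
valued in `ℝ≥0∞`. -/
noncomputable def Tsharp (μ : Measure X) (K : X → X → ℂ) (f : X → ℂ) (x : X) : ℝ≥0∞ :=
  ⨆ (ε : ℝ) (_ : 0 < ε), ENNReal.ofReal ‖∫ y in (closedBall x ε)ᶜ, K x y * f y ∂μ‖

/-- `T` is an `L²(μ)`-bounded Calderón–Zygmund operator with kernel `K` and `L²` norm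
bound `CT`. -/
structure IsCZOperator (μ : Measure X) (K : X → X → ℂ) (T : (X → ℂ) → X → ℂ) (CT : ℝ) :
    Prop where
  map_add : ∀ f g, MemLp f 2 μ → MemLp g 2 μ → T (f + g) = T f + T g
  map_smul : ∀ (c : ℂ) (f), MemLp f 2 μ → T (c • f) = c • T f
  norm_bound : ∀ f, MemLp f 2 μ → eLpNorm (T f) 2 μ ≤ ENNReal.ofReal CT * eLpNorm f 2 μ
  rep : ∀ f : X → ℂ, (∃ M, ∀ x, ‖f x‖ ≤ M) → Bornology.IsBounded (Function.support f) →
    ∀ x, x ∉ tsupport f → T f x = ∫ y, K x y * f y ∂μ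

/-- A David–Mattila lattice with parameters `C0, A0` associated to `μ`:
for each generation `k` a Borel partition `cells k` of `supp μ`, each cell `Q` carrying a
ball `B(Q) = B(center k Q, radius k Q)`. -/
structure DavidMattila (μ : Measure X) (C0 A0 : ℝ) where
  cells : ℕ → Set (Set X)
  center : ℕ → Set X → X
  radius : ℕ → Set X → ℝ
  measurable : ∀ k, ∀ Q ∈ cells k, MeasurableSet Q
  cover : ∀ k, ⋃₀ cells k = msupport μ
  pairwise_disjoint : ∀ k, ∀ Q ∈ cells k, ∀ R ∈ cells k, Q ≠ R → Disjoint Q R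
  nested : ∀ k l, k < l → ∀ Q ∈ cells l, ∀ R ∈ cells k, Q ⊆ R ∨ Disjoint Q R
  center_mem : ∀ k, ∀ Q ∈ cells k, center k Q ∈ msupport μ
  radius_lb : ∀ k, ∀ Q ∈ cells k, A0 ^ (-(k : ℤ)) ≤ radius k Q
  radius_ub : ∀ k, ∀ Q ∈ cells k, radius k Q ≤ C0 * A0 ^ (-(k : ℤ))
  ball_subset : ∀ k, ∀ Q ∈ cells k, msupport μ ∩ ball (center k Q) (radius k Q) ⊆ Q
  subset_ball : ∀ k, ∀ Q ∈ cells k, Q ⊆ msupport μ ∩ ball (center k Q) (28 * radius k Q)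
  disjoint_five : ∀ k, ∀ Q ∈ cells k, ∀ R ∈ cells k, Q ≠ R →
    Disjoint (ball (center k Q) (5 * radius k Q)) (ball (center k R) (5 * radius k R))
  nondoubling : ∀ k, ∀ Q ∈ cells k,
    ENNReal.ofReal C0 * μ (ball (center k Q) (radius k Q)) <
        μ (ball (center k Q) (100 * radius k Q)) →
      radius k Q = A0 ^ (-(k : ℤ)) ∧
      ∀ c : ℝ, 1 ≤ c → c ≤ C0 →
        ENNReal.ofReal C0 * μ (ball (center k Q) (c * radius k Q)) ≤
          μ (ball (center k Q) (100 * c * radius k Q))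

/-- The average `A(f,Q) = μ(αB(Q))⁻¹ ∫_{30B(Q)} |f| dμ` attached to a ball `B(z,r)`. -/
noncomputable def cellAvg (μ : Measure X) (α : ℝ) (f : X → ℂ) (z : X) (r : ℝ) : ℝ≥0∞ :=
  (∫⁻ y in ball z (30 * r), ‖f y‖₊ ∂μ) / μ (ball z (α * r))

/-- `Θ(Q) = μ(αB(Q)) / λ(z_Q, α r(Q))`. -/
noncomputable def theta (μ : Measure X) (lam : X → ℝ → ℝ) (α : ℝ) (z : X) (r : ℝ) : ℝ≥0∞ :=
  μ (ball z (α * r)) / ENNReal.ofReal (lam z (α * r))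

/-- The maximal function `M_λ f(x) = sup_{R>0} λ(x,R)⁻¹ ∫_{B(x,R)} |f| dμ`. -/
noncomputable def Mlam (μ : Measure X) (lam : X → ℝ → ℝ) (f : X → ℂ) (x : X) : ℝ≥0∞ :=
  ⨆ (R : ℝ) (_ : 0 < R), (∫⁻ y in ball x R, ‖f y‖₊ ∂μ) / ENNReal.ofReal (lam x R)

/-- The localized grand maximal truncated operator `N_{Q₀}`. -/
noncomputable def grandMax (μ : Measure X) {C0 A0 : ℝ} (D : DavidMattila μ C0 A0)
    (K : X → X → ℂ) (Q0 : Set X) (f : X → ℂ) (x : X) : ℝ≥0∞ :=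
  Q0.indicator (fun x' =>
    ⨆ (k : ℕ) (P : Set X) (_ : P ∈ D.cells k) (_ : x' ∈ P) (_ : P ⊆ Q0) (y : X) (_ : y ∈ P),
      ENNReal.ofReal
        ‖∫ z in (ball (D.center k P) (30 * D.radius k P))ᶜ, K y z * f z ∂μ‖) x

/-- `∫_S w dμ` for a weight `w`. -/
noncomputable def wInt (μ : Measure X) (w : X → ℝ) (S : Set X) : ℝ≥0∞ :=
  ∫⁻ x in S, ENNReal.ofReal (w x) ∂μ

end
private lemma halve_iter {X : Type*} [MetricSpace X] [MeasurableSpace X] [BorelSpace X]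
    {μ : MeasureTheory.Measure X} {lam : X → ℝ → ℝ} {Cl : ℝ}
    (hud : IsUpperDoubling μ lam Cl) (x : X) :
    ∀ (n : ℕ) (r : ℝ), 0 < r → lam x r ≤ Cl ^ n * lam x (r / 2 ^ n) := by
  intro n
  induction n with
  | zero => intro r hr; simp
  | succ n ih =>
    intro r hr
    have hCl0 : (0:ℝ) < Cl := lt_trans one_pos hud.one_lt
    have h2 : lam x (r / 2 ^ n) ≤ Cl * lam x (r / 2 ^ n / 2) :=
      hud.halving x (r / 2 ^ n) (by positivity)
    calc lam x r ≤ Cl ^ n * lam x (r / 2 ^ n) := ih r hr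
      _ ≤ Cl ^ n * (Cl * lam x (r / 2 ^ n / 2)) :=
          mul_le_mul_of_nonneg_left h2 (by positivity)
      _ = Cl ^ (n + 1) * lam x (r / 2 ^ (n + 1)) := by
          rw [div_div, ← pow_succ]; ring

open Metric in
private lemma meas_step {X : Type*} [MetricSpace X] [MeasurableSpace X] [BorelSpace X]
    (μ : MeasureTheory.Measure X) (C0 α : ℝ) (l₀ : ℕ)
    (hαpos : 0 < α) (hα : 200 ≤ α) (hαC0 : α * (100:ℝ) ^ l₀ ≤ C0)
    (z' zj : X) (r' rj : ℝ) (hr'pos : 0 < r') (hrjpos : 0 < rj)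
    (hsmall : (100:ℝ) ^ l₀ * α * r' ≤ rj) (hd : dist z' zj ≤ 28 * rj)
    (hkey : ∀ c : ℝ, 1 ≤ c → c ≤ C0 →
      ENNReal.ofReal C0 * μ (ball z' (c * r')) ≤ μ (ball z' (100 * c * r'))) :
    ENNReal.ofReal C0 ^ l₀ * μ (ball z' (α * r')) ≤ μ (ball zj (α * rj)) := by
  have hiter : ∀ i, i ≤ l₀ →
      ENNReal.ofReal C0 ^ i * μ (ball z' (α * r')) ≤ μ (ball z' ((100:ℝ) ^ i * α * r')) := by
    intro i
    induction i with
    | zero => intro _; simp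
    | succ i ih =>
      intro hi
      have ihh := ih (by omega)
      have hp : (0:ℝ) < (100:ℝ) ^ i := by positivity
      have hc1 : (1:ℝ) ≤ 100 ^ i * α := by
        have h1 : (1:ℝ) ≤ (100:ℝ) ^ i := one_le_pow₀ (by norm_num)
        nlinarith
      have hc2 : (100:ℝ) ^ i * α ≤ C0 := by
        have h100 : (100:ℝ) ^ i * 100 ≤ 100 ^ l₀ := by
          have := pow_le_pow_right₀ (by norm_num : (1:ℝ) ≤ 100) hi
          rw [pow_succ] at this; linarith
        nlinarith
      have hkey' := hkey ((100:ℝ) ^ i * α) hc1 hc2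
      calc ENNReal.ofReal C0 ^ (i+1) * μ (ball z' (α * r'))
          = ENNReal.ofReal C0 * (ENNReal.ofReal C0 ^ i * μ (ball z' (α * r'))) := by
            rw [pow_succ]; ring
        _ ≤ ENNReal.ofReal C0 * μ (ball z' ((100:ℝ) ^ i * α * r')) :=
            mul_le_mul_right ihh _
        _ ≤ μ (ball z' (100 * ((100:ℝ) ^ i * α) * r')) := hkey'
        _ = μ (ball z' ((100:ℝ) ^ (i+1) * α * r')) := by
            congr 2
            ring
  have hball : ball z' ((100:ℝ) ^ l₀ * α * r') ⊆ ball zj (α * rj) := by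
    apply ball_subset_ball'
    nlinarith
  calc ENNReal.ofReal C0 ^ l₀ * μ (ball z' (α * r'))
      ≤ μ (ball z' ((100:ℝ) ^ l₀ * α * r')) := hiter l₀ le_rfl
    _ ≤ μ (ball zj (α * rj)) := MeasureTheory.measure_mono hball

open MeasureTheory Metric Set ENNReal in
/-- Exponential decay of the densities `Θ(Q)` along nested chains of non-doubling cells
(Lemma 3.1 / cf. David–Mattila Lemma 5.31). -/
theorem theta_decay_nondoubling_chain
    {X : Type*} [MetricSpace X] [MeasurableSpace X] [BorelSpace X]
    (μ : Measure X) [IsLocallyFiniteMeasure μ]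
    (lam : X → ℝ → ℝ) (Cl : ℝ) (hud : IsUpperDoubling μ lam Cl)
    (C0 A0 : ℝ) (hC0 : 1 < C0) (hA0 : 5000 * C0 < A0)
    (D : DavidMattila μ C0 A0)
    (α : ℝ) (hα : 200 ≤ α)
    (l₀ : ℕ) (hl₀ : (100 : ℝ) ^ l₀ ≤ C0 / α) (hl₀' : C0 / α < (100 : ℝ) ^ (l₀ + 1))
    (hbig : Cl ^ ⌈Real.logb 2 A0⌉ < C0 ^ ((l₀ : ℝ) / 2)) :
    ∃ C : ℝ, 0 < C ∧
      ∀ (k m : ℕ) (Q : ℕ → Set X),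
        (∀ j ≤ m, Q j ∈ D.cells (k + j)) →
        (∀ j < m, Q (j + 1) ⊆ Q j) →
        (∀ j, 1 ≤ j → j ≤ m →
          ENNReal.ofReal C0 *
              μ (ball (D.center (k + j) (Q j)) (D.radius (k + j) (Q j))) <
            μ (ball (D.center (k + j) (Q j)) (100 * D.radius (k + j) (Q j)))) →
        theta μ lam α (D.center (k + m) (Q m)) (D.radius (k + m) (Q m)) ≤
          ENNReal.ofReal (C * C0 ^ (-((m : ℝ) * (l₀ : ℝ)) / 2)) *
            theta μ lam α (D.center k (Q 0)) (D.radius k (Q 0)) := by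
  classical
  have hCl : (1:ℝ) < Cl := hud.one_lt
  have hCl0 : (0:ℝ) < Cl := lt_trans one_pos hCl
  have hC0pos : (0:ℝ) < C0 := lt_trans one_pos hC0
  have hA0pos : (0:ℝ) < A0 := by nlinarith
  have hA0one : (1:ℝ) < A0 := by nlinarith
  have hαpos : (0:ℝ) < α := by linarith
  set L : ℕ := (⌈Real.logb 2 A0⌉).toNat with hLdef
  set L' : ℕ := (⌈Real.logb 2 C0⌉).toNat with hL'def
  have hlogA : 0 < Real.logb 2 A0 := Real.logb_pos one_lt_two hA0one
  have hlogC : 0 < Real.logb 2 C0 := Real.logb_pos one_lt_two hC0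
  have hLcast : ((L : ℤ)) = ⌈Real.logb 2 A0⌉ := Int.toNat_of_nonneg (Int.ceil_nonneg hlogA.le)
  have hL'cast : ((L' : ℤ)) = ⌈Real.logb 2 C0⌉ := Int.toNat_of_nonneg (Int.ceil_nonneg hlogC.le)
  -- hbig in ℕ-power form
  have hbig' : Cl ^ L ≤ C0 ^ ((l₀ : ℝ) / 2) := by
    have : Cl ^ ((L : ℤ)) < C0 ^ ((l₀ : ℝ) / 2) := by rw [hLcast]; exact hbig
    rw [zpow_natCast] at this
    exact this.le
  -- 2^L ≥ A0, 2^L' ≥ C0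
  have h2L : A0 ≤ (2:ℝ) ^ L := by
    have h1 : A0 = (2:ℝ) ^ (Real.logb 2 A0) := (Real.rpow_logb two_pos (by norm_num) hA0pos).symm
    have h2 : (2:ℝ) ^ (Real.logb 2 A0) ≤ (2:ℝ) ^ ((L : ℝ)) := by
      apply Real.rpow_le_rpow_of_exponent_le one_le_two
      have := Int.le_ceil (Real.logb 2 A0)
      rw [← hLcast] at this; exact_mod_cast this
    rw [Real.rpow_natCast] at h2; linarith
  have h2L' : C0 ≤ (2:ℝ) ^ L' := by
    have h1 : C0 = (2:ℝ) ^ (Real.logb 2 C0) := (Real.rpow_logb two_pos (by norm_num) hC0pos).symm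
    have h2 : (2:ℝ) ^ (Real.logb 2 C0) ≤ (2:ℝ) ^ ((L' : ℝ)) := by
      apply Real.rpow_le_rpow_of_exponent_le one_le_two
      have := Int.le_ceil (Real.logb 2 C0)
      rw [← hL'cast] at this; exact_mod_cast this
    rw [Real.rpow_natCast] at h2; linarith
  have hαC0 : α * (100:ℝ) ^ l₀ ≤ C0 := by
    have := (le_div_iff₀ hαpos).mp hl₀
    linarith
  refine ⟨Cl ^ (1 + L'), pow_pos hCl0 _, ?_⟩
  intro k m Q hcells hnest hnd
  -- notation
  have rpos : ∀ j, j ≤ m → 0 < D.radius (k + j) (Q j) := by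
    intro j hj
    have h1 := D.radius_lb (k + j) (Q j) (hcells j hj)
    have h2 : (0:ℝ) < A0 ^ (-((k + j : ℕ) : ℤ)) := zpow_pos hA0pos _
    linarith
  have hz : ∀ j, j ≤ m → D.center (k + j) (Q j) ∈ Q j := by
    intro j hj
    exact D.ball_subset (k + j) (Q j) (hcells j hj)
      ⟨D.center_mem _ _ (hcells j hj), mem_ball_self (rpos j hj)⟩
  have hchain : ∀ i j, i ≤ j → j ≤ m → Q j ⊆ Q i := by
    intro i j hij
    induction j with
    | zero =>
      intro _
      have : i = 0 := Nat.le_zero.mp hij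
      subst this; exact subset_rfl
    | succ n ih =>
      intro hjm
      rcases Nat.lt_or_ge i (n + 1) with h | h
      · exact (hnest n (by omega)).trans (ih (by omega) (by omega))
      · have : i = n + 1 := by omega
        subst this; exact subset_rfl
  have hdistij : ∀ i j, i ≤ j → j ≤ m →
      dist (D.center (k + j) (Q j)) (D.center (k + i) (Q i)) ≤ 28 * D.radius (k + i) (Q i) := by
    intro i j hij hjm
    have h1 : D.center (k + j) (Q j) ∈ Q i := hchain i j hij hjm (hz j hjm)
    have h2 := D.subset_ball (k + i) (Q i) (hcells i (le_trans hij hjm)) h1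
    exact (mem_ball.mp h2.2).le
  -- per-step measure estimate
  have hstep : ∀ j, j < m →
      ENNReal.ofReal C0 ^ l₀ * μ (ball (D.center (k + (j+1)) (Q (j+1))) (α * D.radius (k + (j+1)) (Q (j+1)))) ≤
        μ (ball (D.center (k + j) (Q j)) (α * D.radius (k + j) (Q j))) := by
    intro j hj
    have hmem : Q (j+1) ∈ D.cells (k + (j+1)) := hcells (j+1) (by omega)
    have hndj := D.nondoubling (k + (j+1)) (Q (j+1)) hmem (hnd (j+1) (by omega) (by omega))
    have hr'pos : 0 < D.radius (k + (j+1)) (Q (j+1)) := rpos (j+1) (by omega)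
    have hrjpos : 0 < D.radius (k + j) (Q j) := rpos j (by omega)
    have hrad : D.radius (k + (j+1)) (Q (j+1)) = A0 ^ (-((k + (j+1) : ℕ) : ℤ)) := hndj.1
    have hrj : A0 ^ (-((k + j : ℕ) : ℤ)) ≤ D.radius (k + j) (Q j) :=
      D.radius_lb (k + j) (Q j) (hcells j (by omega))
    have hzz : A0 ^ (-((k + (j+1) : ℕ) : ℤ)) = A0 ^ (-((k + j : ℕ) : ℤ)) / A0 := by
      rw [div_eq_mul_inv, ← zpow_sub_one₀ (ne_of_gt hA0pos)]
      congr 1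
      push_cast
      ring
    have hsmall : (100:ℝ) ^ l₀ * α * D.radius (k + (j+1)) (Q (j+1)) ≤ D.radius (k + j) (Q j) := by
      rw [hrad, hzz]
      have hppos : (0:ℝ) < A0 ^ (-((k + j : ℕ) : ℤ)) := zpow_pos hA0pos _
      have h1 : (100:ℝ) ^ l₀ * α * (A0 ^ (-((k + j : ℕ) : ℤ)) / A0) ≤
          C0 * (A0 ^ (-((k + j : ℕ) : ℤ)) / A0) := by
        have h0 : (0:ℝ) ≤ A0 ^ (-((k + j : ℕ) : ℤ)) / A0 := by positivity
        nlinarith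
      have h2 : C0 * (A0 ^ (-((k + j : ℕ) : ℤ)) / A0) ≤ A0 ^ (-((k + j : ℕ) : ℤ)) := by
        rw [mul_div_assoc', div_le_iff₀ hA0pos]
        nlinarith
      linarith
    have hd : dist (D.center (k + (j+1)) (Q (j+1))) (D.center (k + j) (Q j)) ≤
        28 * D.radius (k + j) (Q j) := hdistij j (j+1) (by omega) (by omega)
    exact meas_step μ C0 α l₀ hαpos hα hαC0 _ _ _ _ hr'pos hrjpos hsmall hd hndj.2
  -- iterated measure estimate
  have hmeas : ∀ j, j ≤ m →
      ENNReal.ofReal C0 ^ (l₀ * j) *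
          μ (ball (D.center (k + j) (Q j)) (α * D.radius (k + j) (Q j))) ≤
        μ (ball (D.center (k + 0) (Q 0)) (α * D.radius (k + 0) (Q 0))) := by
    intro j
    induction j with
    | zero => intro _; simp
    | succ j ih =>
      intro hjm
      calc ENNReal.ofReal C0 ^ (l₀ * (j+1)) *
            μ (ball (D.center (k + (j+1)) (Q (j+1))) (α * D.radius (k + (j+1)) (Q (j+1))))
          = ENNReal.ofReal C0 ^ (l₀ * j) * (ENNReal.ofReal C0 ^ l₀ *
            μ (ball (D.center (k + (j+1)) (Q (j+1))) (α * D.radius (k + (j+1)) (Q (j+1))))) := by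
            rw [Nat.mul_succ, pow_add]; ring
        _ ≤ ENNReal.ofReal C0 ^ (l₀ * j) *
            μ (ball (D.center (k + j) (Q j)) (α * D.radius (k + j) (Q j))) :=
            mul_le_mul_right (hstep j (by omega)) _
        _ ≤ _ := ih (by omega)
  -- radius ratio
  set n := L' + m * L with hn
  have hrm : A0 ^ (-((k + m : ℕ) : ℤ)) ≤ D.radius (k + m) (Q m) :=
    D.radius_lb (k + m) (Q m) (hcells m le_rfl)
  have hr0 : D.radius (k + 0) (Q 0) ≤ C0 * A0 ^ (-((k + 0 : ℕ) : ℤ)) :=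
    D.radius_ub (k + 0) (Q 0) (hcells 0 (by omega))
  have hr0pos : 0 < D.radius (k + 0) (Q 0) := rpos 0 (by omega)
  have hrmpos : 0 < D.radius (k + m) (Q m) := rpos m le_rfl
  have hratio : D.radius (k + 0) (Q 0) ≤ 2 ^ n * D.radius (k + m) (Q m) := by
    have hsplit : A0 ^ (-((k + 0 : ℕ) : ℤ)) = A0 ^ m * A0 ^ (-((k + m : ℕ) : ℤ)) := by
      rw [← zpow_natCast A0 m, ← zpow_add₀ (ne_of_gt hA0pos)]
      congr 1
      push_cast
      ring
    have hq : (0:ℝ) < A0 ^ (-((k + m : ℕ) : ℤ)) := zpow_pos hA0pos _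
    have hAm : A0 ^ m ≤ (2:ℝ) ^ (m * L) := by
      calc A0 ^ m ≤ ((2:ℝ) ^ L) ^ m := pow_le_pow_left₀ hA0pos.le h2L m
        _ = (2:ℝ) ^ (m * L) := by rw [← pow_mul, Nat.mul_comm]
    have h2n : (2:ℝ) ^ n = 2 ^ L' * 2 ^ (m * L) := by rw [hn, pow_add]
    calc D.radius (k + 0) (Q 0) ≤ C0 * A0 ^ (-((k + 0 : ℕ) : ℤ)) := hr0
      _ = C0 * A0 ^ m * A0 ^ (-((k + m : ℕ) : ℤ)) := by rw [hsplit]; ring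
      _ ≤ (2:ℝ) ^ L' * 2 ^ (m * L) * D.radius (k + m) (Q m) := by
          apply mul_le_mul
          · apply mul_le_mul h2L' hAm (by positivity) (by positivity)
          · exact hrm
          · exact hq.le
          · positivity
      _ = 2 ^ n * D.radius (k + m) (Q m) := by rw [h2n]
  -- lambda comparison
  have hlam : lam (D.center (k + 0) (Q 0)) (α * D.radius (k + 0) (Q 0)) ≤
      Cl ^ (1 + n) * lam (D.center (k + m) (Q m)) (α * D.radius (k + m) (Q m)) := by
    have hd : dist (D.center (k + 0) (Q 0)) (D.center (k + m) (Q m)) ≤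
        α * D.radius (k + 0) (Q 0) := by
      rw [dist_comm]
      have := hdistij 0 m (by omega) le_rfl
      nlinarith
    have h1 : lam (D.center (k + 0) (Q 0)) (α * D.radius (k + 0) (Q 0)) ≤
        Cl * lam (D.center (k + m) (Q m)) (α * D.radius (k + 0) (Q 0)) :=
      hud.close _ _ _ (by positivity) hd
    have h2 : lam (D.center (k + m) (Q m)) (α * D.radius (k + 0) (Q 0)) ≤
        Cl ^ n * lam (D.center (k + m) (Q m)) (α * D.radius (k + 0) (Q 0) / 2 ^ n) :=
      halve_iter hud _ n _ (by positivity)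
    have h3 : lam (D.center (k + m) (Q m)) (α * D.radius (k + 0) (Q 0) / 2 ^ n) ≤
        lam (D.center (k + m) (Q m)) (α * D.radius (k + m) (Q m)) := by
      apply hud.lam_mono _ _ _ (by positivity)
      rw [div_le_iff₀ (by positivity)]
      nlinarith
    calc lam (D.center (k + 0) (Q 0)) (α * D.radius (k + 0) (Q 0))
        ≤ Cl * lam (D.center (k + m) (Q m)) (α * D.radius (k + 0) (Q 0)) := h1
      _ ≤ Cl * (Cl ^ n * lam (D.center (k + m) (Q m)) (α * D.radius (k + 0) (Q 0) / 2 ^ n)) :=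
          mul_le_mul_of_nonneg_left h2 hCl0.le
      _ ≤ Cl * (Cl ^ n * lam (D.center (k + m) (Q m)) (α * D.radius (k + m) (Q m))) := by
          apply mul_le_mul_of_nonneg_left _ hCl0.le
          exact mul_le_mul_of_nonneg_left h3 (by positivity)
      _ = Cl ^ (1 + n) * lam (D.center (k + m) (Q m)) (α * D.radius (k + m) (Q m)) := by
          ring
  -- power bookkeeping
  set x : ℝ := (m : ℝ) * (l₀ : ℝ) with hx
  have hxnn : (0:ℝ) ≤ x := by positivity
  have hClpow : Cl ^ (1 + n) ≤ Cl ^ (1 + L') * C0 ^ (x / 2) := by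
    have h1 : Cl ^ (1 + n) = Cl ^ (1 + L') * (Cl ^ L) ^ m := by
      rw [hn, ← pow_mul, ← pow_add]
      congr 1
      ring
    have h2 : (Cl ^ L) ^ m ≤ (C0 ^ ((l₀ : ℝ) / 2)) ^ m :=
      pow_le_pow_left₀ (by positivity) hbig' m
    have h3 : (C0 ^ ((l₀ : ℝ) / 2)) ^ m = C0 ^ (x / 2) := by
      rw [← Real.rpow_natCast (C0 ^ ((l₀ : ℝ) / 2)) m, ← Real.rpow_mul hC0pos.le]
      congr 1
      rw [hx]; ring
    rw [h1, ← h3]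
    exact mul_le_mul_of_nonneg_left h2 (by positivity)
  -- endgame in ℝ≥0∞
  set a := μ (ball (D.center (k + m) (Q m)) (α * D.radius (k + m) (Q m))) with ha
  set b := ENNReal.ofReal (lam (D.center (k + m) (Q m)) (α * D.radius (k + m) (Q m))) with hb
  set a0 := μ (ball (D.center (k + 0) (Q 0)) (α * D.radius (k + 0) (Q 0))) with ha0
  set b0 := ENNReal.ofReal (lam (D.center (k + 0) (Q 0)) (α * D.radius (k + 0) (Q 0))) with hb0
  have hb0ne : b0 ≠ 0 := by
    rw [hb0]
    exact (ENNReal.ofReal_pos.mpr (hud.lam_pos _ _ (by positivity))).ne'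
  have hb0top : b0 ≠ ⊤ := by rw [hb0]; exact ENNReal.ofReal_ne_top
  set Cst : ℝ := Cl ^ (1 + L') * C0 ^ (-x / 2) with hCst
  have hCstnn : (0:ℝ) ≤ Cst := by positivity
  have hK'eq : Cst * C0 ^ x = Cl ^ (1 + L') * C0 ^ (x / 2) := by
    rw [hCst, mul_assoc, ← Real.rpow_add hC0pos]
    congr 1
    ring
  -- measure bound in rpow form
  have hmeasx : ENNReal.ofReal (C0 ^ x) * a ≤ a0 := by
    have h1 := hmeas m le_rfl
    have h2 : ENNReal.ofReal C0 ^ (l₀ * m) = ENNReal.ofReal (C0 ^ x) := by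
      rw [← ENNReal.ofReal_pow hC0pos.le]
      congr 1
      rw [← Real.rpow_natCast C0 (l₀ * m)]
      congr 1
      rw [hx]; push_cast; ring
    rw [← h2]
    exact h1
  -- lambda bound in ofReal form
  have hb0le : b0 ≤ ENNReal.ofReal (Cl ^ (1 + L') * C0 ^ (x / 2)) * b := by
    rw [hb0, hb, ← ENNReal.ofReal_mul (by positivity)]
    apply ENNReal.ofReal_le_ofReal
    calc lam (D.center (k + 0) (Q 0)) (α * D.radius (k + 0) (Q 0))
        ≤ Cl ^ (1 + n) * lam (D.center (k + m) (Q m)) (α * D.radius (k + m) (Q m)) := hlam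
      _ ≤ _ := mul_le_mul_of_nonneg_right hClpow
          (hud.lam_pos _ _ (by positivity)).le
  -- final chain
  have hfinal : a * b0 ≤ ENNReal.ofReal Cst * a0 * b := by
    calc a * b0 ≤ a * (ENNReal.ofReal (Cl ^ (1 + L') * C0 ^ (x / 2)) * b) :=
          mul_le_mul_right hb0le _
      _ = (ENNReal.ofReal (Cst * C0 ^ x) * a) * b := by rw [hK'eq]; ring
      _ = (ENNReal.ofReal Cst * (ENNReal.ofReal (C0 ^ x) * a)) * b := by
          rw [ENNReal.ofReal_mul hCstnn]; ring
      _ ≤ (ENNReal.ofReal Cst * a0) * b :=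
          mul_le_mul_left (mul_le_mul_right hmeasx _) _
      _ = ENNReal.ofReal Cst * a0 * b := rfl
  have hgoal : a / b ≤ ENNReal.ofReal Cst * (a0 / b0) := by
    apply ENNReal.div_le_of_le_mul
    calc a = a * b0 / b0 := by rw [mul_div_assoc, ENNReal.div_self hb0ne hb0top, mul_one]
      _ ≤ ENNReal.ofReal Cst * a0 * b / b0 := ENNReal.div_le_div_right hfinal _
      _ = ENNReal.ofReal Cst * (a0 / b0) * b := by
          rw [div_eq_mul_inv, div_eq_mul_inv]; ring
  -- translate to the stated goal
  have hk0 : k + 0 = k := Nat.add_zero k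
  rw [hk0] at ha0 hb0
  show theta μ lam α (D.center (k + m) (Q m)) (D.radius (k + m) (Q m)) ≤
      ENNReal.ofReal (Cl ^ (1 + L') * C0 ^ (-((m : ℝ) * (l₀ : ℝ)) / 2)) *
        theta μ lam α (D.center k (Q 0)) (D.radius k (Q 0))
  unfold theta
  rw [← ha, ← hb, ← ha0, ← hb0]
  have : Cl ^ (1 + L') * C0 ^ (-((m : ℝ) * (l₀ : ℝ)) / 2) = Cst := by
    rw [hCst, hx]
  rw [this]
  exact hgoal
end

section
/- Let (X,d) be a metric space, μ a locally finite Borel measure, α ≥ 200, and let D be a David–Mattila lattice with parameters C_0, A_0. Define the maximal operator M_μ f(x) := sup over cells Q ∈ D with x ∈ Q of A(f,Q), where A(f,Q) := μ(αB(Q))^{−1}∫_{30B(Q)}|f|dμ. Then M_μ has weak type (1,1) with an absolute constant: μ{x : M_μ f(x) > t} ≤ C·‖f‖_{L¹(μ)}/t for all f ∈ L¹(μ) and t > 0. -/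
open MeasureTheory Metric Set ENNReal

open MeasureTheory Metric Set ENNReal in
/-- The maximal operator `M_μ f(x) = sup_{x ∈ Q ∈ D} A(f,Q)` over David–Mattila cells
has weak type `(1,1)`. -/
theorem cell_maximal_weak_type
    {X : Type*} [MetricSpace X] [MeasurableSpace X] [BorelSpace X]
    (μ : Measure X) [IsLocallyFiniteMeasure μ]
    (C0 A0 : ℝ) (hC0 : 1 < C0) (hA0 : 5000 * C0 < A0)
    (D : DavidMattila μ C0 A0)
    (α : ℝ) (hα : 200 ≤ α) :
    ∃ C : ℝ, 0 < C ∧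
      ∀ f : X → ℂ, Integrable f μ → ∀ t : ℝ, 0 < t →
        μ {x | ENNReal.ofReal t <
            ⨆ (k : ℕ) (Q : Set X) (_ : Q ∈ D.cells k) (_ : x ∈ Q),
              cellAvg μ α f (D.center k Q) (D.radius k Q)} ≤
          ENNReal.ofReal (C / t) * ∫⁻ y, ‖f y‖₊ ∂μ := by
  have hA0pos : (0:ℝ) < A0 := by nlinarith
  have hA0one : (1:ℝ) ≤ A0 := by nlinarith
  refine ⟨1, one_pos, ?_⟩
  intro f hf t ht
  set tE := ENNReal.ofReal t with htEdef
  have htE0 : 0 < tE := ENNReal.ofReal_pos.2 ht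
  set z : ℕ × Set X → X := fun p => D.center p.1 p.2 with hzdef
  set rad : ℕ × Set X → ℝ := fun p => D.radius p.1 p.2 with hraddef
  set bad : Set (ℕ × Set X) :=
    {p | p.2 ∈ D.cells p.1 ∧ tE < cellAvg μ α f (z p) (rad p)} with hbaddef
  have hradpos : ∀ p ∈ bad, 0 < rad p := by
    intro p hp
    have h1 : A0 ^ (-(p.1 : ℤ)) ≤ rad p := D.radius_lb p.1 p.2 hp.1
    have : (0:ℝ) < A0 ^ (-(p.1 : ℤ)) := zpow_pos hA0pos _
    linarith
  have hradle : ∀ p ∈ bad, rad p ≤ C0 := by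
    intro p hp
    have h1 : rad p ≤ C0 * A0 ^ (-(p.1 : ℤ)) := D.radius_ub p.1 p.2 hp.1
    have h2 : A0 ^ (-(p.1 : ℤ)) ≤ 1 := by
      have := zpow_le_one_of_nonpos₀ hA0one (by simp : -(p.1:ℤ) ≤ 0)
      exact this
    nlinarith
  obtain ⟨u, hu_sub, hu_disj, hu_cov⟩ :=
    Vitali.exists_disjoint_subfamily_covering_enlargement
      (fun p => ball (z p) (30 * rad p)) bad rad 2 one_lt_two
      (fun p hp => (hradpos p hp).le) C0 hradle
      (fun p hp => ⟨z p, mem_ball_self (by have := hradpos p hp; linarith)⟩)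
  -- key per-cell inequality
  have key : ∀ p ∈ bad,
      tE * μ (ball (z p) (α * rad p)) ≤ ∫⁻ y in ball (z p) (30 * rad p), ‖f y‖₊ ∂μ := by
    intro p hp
    exact ENNReal.mul_le_of_le_div hp.2.le
  have hsupp : ∀ p ∈ bad, 0 < μ (ball (z p) (30 * rad p)) := by
    intro p hp
    exact D.center_mem p.1 p.2 hp.1 (30 * rad p) (by have := hradpos p hp; linarith)
  -- covering
  have hcover : {x | tE < ⨆ (k : ℕ) (Q : Set X) (_ : Q ∈ D.cells k) (_ : x ∈ Q),
        cellAvg μ α f (D.center k Q) (D.radius k Q)} ⊆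
      ⋃ p ∈ u, ball (z p) (α * rad p) := by
    intro x hx
    simp only [mem_setOf_eq, lt_iSup_iff] at hx
    obtain ⟨k, Q, hQ, hxQ, hlt⟩ := hx
    have hpbad : (k, Q) ∈ bad := ⟨hQ, hlt⟩
    obtain ⟨b, hbu, hinter, hle⟩ := hu_cov (k, Q) hpbad
    have hbbad : b ∈ bad := hu_sub hbu
    have hrb : 0 < rad b := hradpos b hbbad
    have hra : 0 < rad (k, Q) := hradpos _ hpbad
    obtain ⟨w, hw1, hw2⟩ := hinter
    have hzz : dist (z (k, Q)) (z b) < 30 * rad (k, Q) + 30 * rad b := by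
      have := dist_triangle (z (k, Q)) w (z b)
      have h1 : dist (z (k, Q)) w < 30 * rad (k, Q) := by
        rw [dist_comm]; exact mem_ball.1 hw1
      have h2 : dist w (z b) < 30 * rad b := mem_ball.1 hw2
      linarith
    have hxball : x ∈ ball (z (k, Q)) (30 * rad (k, Q)) := by
      have := D.subset_ball k Q hQ hxQ
      have hx28 : dist x (z (k, Q)) < 28 * rad (k, Q) := mem_ball.1 this.2
      exact mem_ball.2 (by linarith)
    have hxb : x ∈ ball (z b) (α * rad b) := by
      have hd : dist x (z b) < 30 * rad (k, Q) + dist (z (k, Q)) (z b) := by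
        have := dist_triangle x (z (k, Q)) (z b)
        have := mem_ball.1 hxball
        linarith
      have : dist x (z b) < 60 * rad (k, Q) + 30 * rad b := by linarith
      have hle2 : rad (k, Q) ≤ 2 * rad b := hle
      have : dist x (z b) < 150 * rad b := by linarith
      exact mem_ball.2 (by nlinarith)
    exact mem_biUnion hbu hxb
  -- countability of u
  set ν := μ.withDensity (fun y => (‖f y‖₊ : ℝ≥0∞)) with hνdef
  have hνball : ∀ p : ℕ × Set X, ν (ball (z p) (30 * rad p))
      = ∫⁻ y in ball (z p) (30 * rad p), ‖f y‖₊ ∂μ := by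
    intro p; exact withDensity_apply _ measurableSet_ball
  have hdisj' : Pairwise (Function.onFun Disjoint
      (fun b : u => ball (z b.1) (30 * rad b.1))) := by
    intro i j hij
    exact hu_disj i.2 j.2 (fun h => hij (Subtype.ext h))
  have hνfin : ν (⋃ b : u, ball (z b.1) (30 * rad b.1)) ≠ ∞ := by
    refine ne_top_of_le_ne_top ?_ (measure_mono (subset_univ _))
    have : ν univ = ∫⁻ y, ‖f y‖₊ ∂μ := by
      rw [hνdef, withDensity_apply _ MeasurableSet.univ, Measure.restrict_univ]
    rw [this]
    exact hf.2.ne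
  have hcnt : u.Countable := by
    have hpos : ∀ b : u, 0 < ν (ball (z b.1) (30 * rad b.1)) := by
      intro b
      have hb : (b : ℕ × Set X) ∈ bad := hu_sub b.2
      rw [hνball]
      refine lt_of_lt_of_le ?_ (key b hb)
      have h30α : μ (ball (z b.1) (30 * rad b.1)) ≤ μ (ball (z b.1) (α * rad b.1)) := by
        apply measure_mono
        apply ball_subset_ball
        have := hradpos b hb; nlinarith
      have : 0 < μ (ball (z b.1) (α * rad b.1)) := lt_of_lt_of_le (hsupp b hb) h30α
      exact ENNReal.mul_pos htE0.ne' this.ne'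
    have hcnt' := MeasureTheory.Measure.countable_meas_pos_of_disjoint_of_meas_iUnion_ne_top
      ν (fun b : u => measurableSet_ball) hdisj' hνfin
    have : {b : u | 0 < ν (ball (z b.1) (30 * rad b.1))} = univ := by
      ext b; simp [hpos b]
    rw [this] at hcnt'
    rw [← Set.countable_coe_iff]
    exact Set.countable_univ_iff.1 hcnt'
  haveI : Countable u := hcnt.to_subtype
  -- putting things together
  have step1 : μ {x | tE < ⨆ (k : ℕ) (Q : Set X) (_ : Q ∈ D.cells k) (_ : x ∈ Q),
        cellAvg μ α f (D.center k Q) (D.radius k Q)} ≤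
      ∑' b : u, μ (ball (z b.1) (α * rad b.1)) := by
    refine le_trans (measure_mono hcover) ?_
    rw [Set.biUnion_eq_iUnion]
    exact measure_iUnion_le _
  have step2 : ∑' b : u, μ (ball (z b.1) (α * rad b.1)) ≤
      (∫⁻ y, ‖f y‖₊ ∂μ) / tE := by
    rw [ENNReal.le_div_iff_mul_le (Or.inl htE0.ne') (Or.inl ENNReal.ofReal_ne_top)]
    rw [← ENNReal.tsum_mul_right]
    have hsum : ∑' b : u, μ (ball (z b.1) (α * rad b.1)) * tE ≤
        ∑' b : u, ∫⁻ y in ball (z b.1) (30 * rad b.1), ‖f y‖₊ ∂μ := by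
      refine ENNReal.tsum_le_tsum fun b => ?_
      rw [mul_comm]
      exact key b (hu_sub b.2)
    refine le_trans hsum ?_
    have := MeasureTheory.lintegral_iUnion (μ := μ)
      (fun b : u => measurableSet_ball (x := z b.1) (ε := 30 * rad b.1)) hdisj'
      (fun y => (‖f y‖₊ : ℝ≥0∞))
    rw [← this]
    exact lintegral_mono' (Measure.restrict_le_self) le_rfl
  have hfinal : ENNReal.ofReal (1 / t) * ∫⁻ y, ‖f y‖₊ ∂μ = (∫⁻ y, ‖f y‖₊ ∂μ) / tE := by
    rw [one_div, ENNReal.ofReal_inv_of_pos ht, ENNReal.div_eq_inv_mul]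
  rw [hfinal]
  exact le_trans step1 step2
end

section
/- Let (X,d,μ) be upper doubling with dominating function λ and constant C_λ. Then the maximal operator M_λ f(x) := sup_{R>0} λ(x,R)^{−1} ∫_{B(x,R)} |f| dμ has weak type (1,1): there is a constant C depending only on C_λ such that μ{x : M_λ f(x) > t} ≤ C·‖f‖_{L¹(μ)}/t for all f ∈ L¹(μ) and t > 0. -/
open MeasureTheory Metric Set ENNReal

open MeasureTheory Metric Set ENNReal in
/-- The maximal operator `M_λ` associated to the dominating function of an upper
doubling measure has weak type `(1,1)`, with constant depending only on `C_λ`. -/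
theorem Mlam_weak_type
    {X : Type*} [MetricSpace X] [MeasurableSpace X] [BorelSpace X]
    (μ : Measure X) [IsLocallyFiniteMeasure μ]
    (lam : X → ℝ → ℝ) (Cl : ℝ) (hud : IsUpperDoubling μ lam Cl) :
    ∃ C : ℝ, 0 < C ∧
      ∀ f : X → ℂ, Integrable f μ → ∀ t : ℝ, 0 < t →
        μ {x | ENNReal.ofReal t < Mlam μ lam f x} ≤
          ENNReal.ofReal (C / t) * ∫⁻ y, ‖f y‖₊ ∂μ := by
  obtain ⟨h1, hpos, hmono, hmeas, hhalf, -⟩ := hud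
  have hCl : (0:ℝ) < Cl := lt_trans one_pos h1
  refine ⟨Cl ^ 3, by positivity, ?_⟩
  intro f hf t ht
  have ht0 : ENNReal.ofReal t ≠ 0 := (ENNReal.ofReal_pos.2 ht).ne'
  set ν := μ.withDensity (fun y => (‖f y‖₊ : ℝ≥0∞)) with hνdef
  have hν_apply : ∀ s : Set X, MeasurableSet s → ν s = ∫⁻ y in s, ‖f y‖₊ ∂μ :=
    fun s hs => withDensity_apply _ hs
  have hν_univ : ν Set.univ = ∫⁻ y, ‖f y‖₊ ∂μ := by
    rw [hν_apply _ MeasurableSet.univ, Measure.restrict_univ]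
  have hI : ν Set.univ ≠ ∞ := by rw [hν_univ]; exact ne_of_lt hf.2
  set A : ℕ → Set X := fun n =>
    {x | ∃ R : ℝ, 0 < R ∧ R ≤ (n:ℝ) ∧
      ENNReal.ofReal t * ENNReal.ofReal (lam x R) < ν (ball x R)} with hA
  have hAmono : Monotone A := by
    intro m n hmn x hx
    obtain ⟨R, h0, hRm, hlt⟩ := hx
    exact ⟨R, h0, hRm.trans (by exact_mod_cast hmn), hlt⟩
  have hcover : {x | ENNReal.ofReal t < Mlam μ lam f x} ⊆ ⋃ n, A n := by
    intro x hx
    simp only [Mlam, lt_iSup_iff, Set.mem_setOf_eq] at hx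
    obtain ⟨R, hR, hlt⟩ := hx
    obtain ⟨n, hn⟩ := exists_nat_ge R
    refine Set.mem_iUnion.2 ⟨n, R, hR, hn, ?_⟩
    rw [hν_apply _ measurableSet_ball]
    exact (ENNReal.lt_div_iff_mul_lt (Or.inl (ENNReal.ofReal_pos.2 (hpos x R hR)).ne')
      (Or.inl ENNReal.ofReal_ne_top)).1 hlt
  have key : ∀ n : ℕ, μ (A n) ≤ ENNReal.ofReal (Cl^3 / t) * ν Set.univ := by
    intro n
    have hsel : ∀ x ∈ A n, ∃ R : ℝ, 0 < R ∧ R ≤ (n:ℝ) ∧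
        ENNReal.ofReal t * ENNReal.ofReal (lam x R) < ν (ball x R) := fun x hx => hx
    choose! R hR0 hRn hRt using hsel
    obtain ⟨u, hu_sub, hu_disj, hu_cov⟩ :=
      Vitali.exists_disjoint_subfamily_covering_enlargement_closedBall (A n) id R (n : ℝ)
        (fun a ha => hRn a ha) 4 (by norm_num)
    have hpos_ball : ∀ b ∈ u, 0 < ν (ball b (R b)) := fun b hb =>
      lt_trans (ENNReal.mul_pos ht0 (ENNReal.ofReal_pos.2
        (hpos b (R b) (hR0 b (hu_sub hb)))).ne') (hRt b (hu_sub hb))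
    have hdisj : Pairwise (Function.onFun Disjoint (fun b : ↥u => ball (b:X) (R (b:X)))) := by
      intro i j hij
      have hne : (i:X) ≠ (j:X) := fun h => hij (Subtype.coe_injective h)
      have := hu_disj i.2 j.2 hne
      simp only [Function.onFun, id] at this ⊢
      exact this.mono ball_subset_closedBall ball_subset_closedBall
    have hu_cnt : u.Countable := by
      have hfin : ν (⋃ b : ↥u, ball (b:X) (R (b:X))) ≠ ∞ :=
        ne_of_lt (lt_of_le_of_lt (measure_mono (Set.subset_univ _))
          (lt_top_iff_ne_top.2 hI))
      have hcnt := MeasureTheory.Measure.countable_meas_pos_of_disjoint_of_meas_iUnion_ne_top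
        (μ := ν) (As := fun b : ↥u => ball (b:X) (R (b:X)))
        (fun _ => measurableSet_ball) hdisj hfin
      have huniv : {i : ↥u | 0 < ν (ball (i:X) (R (i:X)))} = Set.univ :=
        Set.eq_univ_of_forall fun i => hpos_ball (i:X) i.2
      rw [huniv, Set.countable_univ_iff] at hcnt
      exact Set.countable_coe_iff.1 hcnt
    have : Countable ↥u := hu_cnt.to_subtype
    have hsum : μ (A n) ≤ ∑' b : ↥u, μ (closedBall (b:X) (4 * R (b:X))) := by
      refine le_trans (measure_mono ?_) (measure_biUnion_le μ hu_cnt (fun b => closedBall b (4 * R b)))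
      intro a ha
      obtain ⟨b, hb, hsub⟩ := hu_cov a ha
      simp only [id] at hsub
      exact Set.mem_biUnion hb (hsub (mem_closedBall_self (hR0 a ha).le))
    have hball : ∀ b ∈ u, μ (closedBall b (4 * R b)) ≤
        ENNReal.ofReal (Cl^3) * ((ENNReal.ofReal t)⁻¹ * ν (ball b (R b))) := by
      intro b hb
      have h0 : 0 < R b := hR0 b (hu_sub hb)
      have h5 : μ (closedBall b (4 * R b)) ≤ ENNReal.ofReal (lam b (5 * R b)) :=
        le_trans (measure_mono (closedBall_subset_ball (by linarith)))
          (hmeas b (5 * R b) (by linarith))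
      have hlam : lam b (5 * R b) ≤ Cl^3 * lam b (R b) := by
        have e1 := hhalf b (5*R b) (by linarith)
        have e2 := hhalf b (5*R b/2) (by linarith)
        have e3 := hhalf b (5*R b/2/2) (by linarith)
        have e4 := hmono b (5*R b/2/2/2) (R b) (by linarith) (by linarith)
        calc lam b (5*R b) ≤ Cl * lam b (5*R b/2) := e1
          _ ≤ Cl * (Cl * lam b (5*R b/2/2)) := mul_le_mul_of_nonneg_left e2 hCl.le
          _ ≤ Cl * (Cl * (Cl * lam b (5*R b/2/2/2))) :=
              mul_le_mul_of_nonneg_left (mul_le_mul_of_nonneg_left e3 hCl.le) hCl.le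
          _ ≤ Cl * (Cl * (Cl * lam b (R b))) :=
              mul_le_mul_of_nonneg_left (mul_le_mul_of_nonneg_left
                (mul_le_mul_of_nonneg_left e4 hCl.le) hCl.le) hCl.le
          _ = Cl^3 * lam b (R b) := by ring
      have hlam2 : ENNReal.ofReal (lam b (R b)) ≤ (ENNReal.ofReal t)⁻¹ * ν (ball b (R b)) := by
        calc ENNReal.ofReal (lam b (R b))
            = (ENNReal.ofReal t)⁻¹ * (ENNReal.ofReal t * ENNReal.ofReal (lam b (R b))) := by
              rw [← mul_assoc, ENNReal.inv_mul_cancel ht0 ENNReal.ofReal_ne_top, one_mul]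
          _ ≤ _ := mul_le_mul_right (hRt b (hu_sub hb)).le _
      calc μ (closedBall b (4*R b)) ≤ ENNReal.ofReal (lam b (5*R b)) := h5
        _ ≤ ENNReal.ofReal (Cl^3 * lam b (R b)) := ENNReal.ofReal_le_ofReal hlam
        _ = ENNReal.ofReal (Cl^3) * ENNReal.ofReal (lam b (R b)) :=
            ENNReal.ofReal_mul (by positivity)
        _ ≤ _ := mul_le_mul_right hlam2 _
    calc μ (A n) ≤ ∑' b : ↥u, μ (closedBall (b:X) (4 * R (b:X))) := hsum
      _ ≤ ∑' b : ↥u, ENNReal.ofReal (Cl^3) * ((ENNReal.ofReal t)⁻¹ * ν (ball (b:X) (R (b:X)))) :=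
          ENNReal.tsum_le_tsum (fun b => hball (b:X) b.2)
      _ = ENNReal.ofReal (Cl^3) * ((ENNReal.ofReal t)⁻¹ * ∑' b : ↥u, ν (ball (b:X) (R (b:X)))) := by
          rw [ENNReal.tsum_mul_left, ENNReal.tsum_mul_left]
      _ = ENNReal.ofReal (Cl^3) * ((ENNReal.ofReal t)⁻¹ * ν (⋃ b : ↥u, ball (b:X) (R (b:X)))) := by
          rw [measure_iUnion hdisj (fun _ => measurableSet_ball)]
      _ ≤ ENNReal.ofReal (Cl^3) * ((ENNReal.ofReal t)⁻¹ * ν Set.univ) := by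
          exact mul_le_mul_right (mul_le_mul_right (measure_mono (Set.subset_univ _)) _) _
      _ = ENNReal.ofReal (Cl^3 / t) * ν Set.univ := by
          rw [div_eq_mul_inv, ENNReal.ofReal_mul (by positivity),
            ENNReal.ofReal_inv_of_pos ht, mul_assoc]
  calc μ {x | ENNReal.ofReal t < Mlam μ lam f x} ≤ μ (⋃ n, A n) := measure_mono hcover
    _ = ⨆ n, μ (A n) := Directed.measure_iUnion hAmono.directed_le
    _ ≤ ENNReal.ofReal (Cl^3 / t) * ν Set.univ := iSup_le key
    _ = ENNReal.ofReal (Cl^3 / t) * ∫⁻ y, ‖f y‖₊ ∂μ := by rw [hν_univ]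
end

section
/- Let (X,d,μ) be upper doubling with dominating function λ and constant C_λ, and let C_0 > C_λ^7. Then for every x ∈ X and every r > 0 with μ(B(x,r)) > 0 there exists an integer k ≥ 0 such that the ball B := B(x, 100^k·r) satisfies the doubling condition μ(100B) ≤ C_0·μ(B). In particular, every bounded set X' ⊂ X with X' ∩ supp μ ≠ ∅ is contained in a ball B with μ(100B) ≤ C_0·μ(B). -/
open MeasureTheory Metric Set ENNReal

open MeasureTheory Metric Set ENNReal in
private lemma halving_iter {X : Type*} [MetricSpace X] [MeasurableSpace X] [BorelSpace X]
    {μ : Measure X} {lam : X → ℝ → ℝ} {Cl : ℝ} (hud : IsUpperDoubling μ lam Cl)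
    (x : X) (n : ℕ) : ∀ r : ℝ, 0 < r → lam x r ≤ Cl ^ n * lam x (r / 2 ^ n) := by
  have hCl : (0:ℝ) < Cl := lt_trans one_pos hud.one_lt
  induction n with
  | zero => intro r hr; simp
  | succ n ih =>
    intro r hr
    have h1 : lam x r ≤ Cl * lam x (r / 2) := hud.halving x r hr
    have h2 : lam x (r / 2) ≤ Cl ^ n * lam x (r / 2 / 2 ^ n) := ih (r / 2) (by linarith)
    calc lam x r ≤ Cl * lam x (r / 2) := h1
      _ ≤ Cl * (Cl ^ n * lam x (r / 2 / 2 ^ n)) := by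
          exact mul_le_mul_of_nonneg_left h2 hCl.le
      _ = Cl ^ (n + 1) * lam x (r / 2 ^ (n + 1)) := by ring_nf

open MeasureTheory Metric Set ENNReal in
private lemma hundred_bound {X : Type*} [MetricSpace X] [MeasurableSpace X] [BorelSpace X]
    {μ : Measure X} {lam : X → ℝ → ℝ} {Cl : ℝ} (hud : IsUpperDoubling μ lam Cl)
    (x : X) {s : ℝ} (hs : 0 < s) : lam x (100 * s) ≤ Cl ^ 7 * lam x s := by
  have hCl : (0:ℝ) < Cl := lt_trans one_pos hud.one_lt
  have h1 : lam x (100 * s) ≤ Cl ^ 7 * lam x (100 * s / 2 ^ 7) :=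
    halving_iter hud x 7 (100 * s) (by linarith)
  have h2 : lam x (100 * s / 2 ^ 7) ≤ lam x s := by
    apply hud.lam_mono x _ s (by norm_num; linarith) (by norm_num; linarith)
  calc lam x (100 * s) ≤ Cl ^ 7 * lam x (100 * s / 2 ^ 7) := h1
    _ ≤ Cl ^ 7 * lam x s := mul_le_mul_of_nonneg_left h2 (by positivity)

open MeasureTheory Metric Set ENNReal in
private lemma pow_hundred_bound {X : Type*} [MetricSpace X] [MeasurableSpace X] [BorelSpace X]
    {μ : Measure X} {lam : X → ℝ → ℝ} {Cl : ℝ} (hud : IsUpperDoubling μ lam Cl)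
    (x : X) {r : ℝ} (hr : 0 < r) (k : ℕ) :
    lam x (100 ^ k * r) ≤ (Cl ^ 7) ^ k * lam x r := by
  induction k with
  | zero => simp
  | succ k ih =>
    have hs : (0:ℝ) < 100 ^ k * r := by positivity
    have h1 : lam x (100 ^ (k + 1) * r) ≤ Cl ^ 7 * lam x (100 ^ k * r) := by
      have := hundred_bound hud x hs
      calc lam x (100 ^ (k + 1) * r) = lam x (100 * (100 ^ k * r)) := by ring_nf
        _ ≤ Cl ^ 7 * lam x (100 ^ k * r) := this
    calc lam x (100 ^ (k + 1) * r) ≤ Cl ^ 7 * lam x (100 ^ k * r) := h1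
      _ ≤ Cl ^ 7 * ((Cl ^ 7) ^ k * lam x r) := by
          apply mul_le_mul_of_nonneg_left ih
          have hCl : (0:ℝ) < Cl := lt_trans one_pos hud.one_lt
          positivity
      _ = (Cl ^ 7) ^ (k + 1) * lam x r := by ring

open MeasureTheory Metric Set ENNReal in
/-- Existence of doubling balls for an upper doubling measure: if `C₀ > C_λ^7`, any
ball of positive measure can be dilated by a power of `100` to a `C₀`-doubling ball;
in particular any bounded set meeting `supp μ` is contained in a doubling ball. -/
theorem doubling_ball_exists
    {X : Type*} [MetricSpace X] [MeasurableSpace X] [BorelSpace X]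
    (μ : Measure X) [IsLocallyFiniteMeasure μ]
    (lam : X → ℝ → ℝ) (Cl : ℝ) (hud : IsUpperDoubling μ lam Cl)
    (C0 : ℝ) (hC0 : Cl ^ 7 < C0) :
    (∀ (x : X) (r : ℝ), 0 < r → 0 < μ (ball x r) →
      ∃ k : ℕ, μ (ball x (100 * (100 ^ k * r))) ≤
        ENNReal.ofReal C0 * μ (ball x (100 ^ k * r))) ∧
    (∀ X' : Set X, Bornology.IsBounded X' → (X' ∩ msupport μ).Nonempty →
      ∃ (z : X) (R : ℝ), 0 < R ∧ X' ⊆ ball z R ∧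
        μ (ball z (100 * R)) ≤ ENNReal.ofReal C0 * μ (ball z R)) := by
  have hCl1 : (1:ℝ) < Cl := hud.one_lt
  have hCl : (0:ℝ) < Cl := lt_trans one_pos hCl1
  have hCl7 : (1:ℝ) < Cl ^ 7 := one_lt_pow₀ hCl1 (by norm_num)
  have hC0pos : (0:ℝ) < C0 := lt_trans (by positivity) hC0
  have main : ∀ (x : X) (r : ℝ), 0 < r → 0 < μ (ball x r) →
      ∃ k : ℕ, μ (ball x (100 * (100 ^ k * r))) ≤
        ENNReal.ofReal C0 * μ (ball x (100 ^ k * r)) := by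
    intro x r hr hpos
    have hlam : 0 < lam x r := hud.lam_pos x r hr
    by_contra hcon
    push_neg at hcon
    set m : ℕ → ℝ≥0∞ := fun k => μ (ball x (100 ^ k * r)) with hm
    have hstep : ∀ k, ENNReal.ofReal C0 * m k < m (k + 1) := by
      intro k
      have := hcon k
      have heq : (100:ℝ) ^ (k + 1) * r = 100 * (100 ^ k * r) := by ring
      simpa [hm, heq] using this
    have hub : ∀ k, m k ≤ ENNReal.ofReal ((Cl ^ 7) ^ k * lam x r) := by
      intro k
      have hrk : (0:ℝ) < 100 ^ k * r := by positivity
      calc m k ≤ ENNReal.ofReal (lam x (100 ^ k * r)) := hud.measure_le x _ hrk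
        _ ≤ ENNReal.ofReal ((Cl ^ 7) ^ k * lam x r) :=
            ENNReal.ofReal_le_ofReal (pow_hundred_bound hud x hr k)
    have hm0fin : m 0 < ⊤ :=
      lt_of_le_of_lt (hub 0) ENNReal.ofReal_lt_top
    have hm0pos : 0 < m 0 := by simpa [hm] using hpos
    set t : ℝ := (m 0).toReal with ht
    have htpos : 0 < t := ENNReal.toReal_pos hm0pos.ne' hm0fin.ne
    have hlow : ∀ k, ENNReal.ofReal C0 ^ k * m 0 ≤ m k := by
      intro k
      induction k with
      | zero => simp
      | succ k ih =>
        calc ENNReal.ofReal C0 ^ (k + 1) * m 0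
            = ENNReal.ofReal C0 * (ENNReal.ofReal C0 ^ k * m 0) := by ring
          _ ≤ ENNReal.ofReal C0 * m k := by
              exact mul_le_mul_right ih _
          _ ≤ m (k + 1) := (hstep k).le
    -- choose k large
    have hratio : (1:ℝ) < C0 / Cl ^ 7 := (one_lt_div (by positivity)).2 hC0
    obtain ⟨k, hk⟩ := pow_unbounded_of_one_lt (lam x r / t) hratio
    have hkey : (Cl ^ 7) ^ k * lam x r < C0 ^ k * t := by
      have h1 : lam x r / t < (C0 / Cl ^ 7) ^ k := hk
      have h2 : (C0 / Cl ^ 7) ^ k = C0 ^ k / (Cl ^ 7) ^ k := by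
        rw [div_pow]
      rw [h2, div_lt_div_iff₀ htpos (by positivity)] at h1
      linarith
    have hfin : m k ≤ ENNReal.ofReal ((Cl ^ 7) ^ k * lam x r) := hub k
    have hge : ENNReal.ofReal (C0 ^ k * t) ≤ m k := by
      have : ENNReal.ofReal (C0 ^ k * t) = ENNReal.ofReal C0 ^ k * m 0 := by
        rw [ENNReal.ofReal_mul (by positivity), ← ENNReal.ofReal_pow hC0pos.le,
          ht, ENNReal.ofReal_toReal hm0fin.ne]
      rw [this]
      exact hlow k
    have : ENNReal.ofReal (C0 ^ k * t) ≤ ENNReal.ofReal ((Cl ^ 7) ^ k * lam x r) :=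
      hge.trans hfin
    rw [ENNReal.ofReal_le_ofReal_iff (by positivity)] at this
    linarith
  refine ⟨main, ?_⟩
  intro X' hbd ⟨x, hxX', hxs⟩
  obtain ⟨r, hr0, hsub⟩ := hbd.subset_ball_lt 0 x
  have hpos : 0 < μ (ball x r) := hxs r hr0
  obtain ⟨k, hk⟩ := main x r hr0 hpos
  refine ⟨x, 100 ^ k * r, by positivity, ?_, hk⟩
  refine hsub.trans (ball_subset_ball ?_)
  nlinarith [pow_le_pow_right₀ (by norm_num : (1:ℝ) ≤ 100) (Nat.zero_le k)]
end
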